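/- Let u, v, w be three mutually distinct nonsingular vectors of W that are pairwise adjacent (i.e., Q(u+v) = Q(u+w) = Q(v+w) = 1). Then w = u + v (equivalently, {u, v, w} is the set of nonzero vectors of a 2-dimensional subspace, i.e., a totally nonsingular projective line) if and only if every nonsingular vector z ∉ {u, v, w} is adjacent to exactly two elements of {u, v, w} or to no element of {u, v, w}. -/

import Mathlib

/-- The 2n-dimensional vector space `W = V × V*` over the field with two elements. -/
abbrev Wsp (n : ℕ) := (Fin n → ZMod 2) × ((Fin n → ZMod 2) →ₗ[ZMod 2] ZMod 2)

/-- The hyperbolic quadratic form `Q(x, x^*) = x^*(x)` on `W`. -/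
def Qf {n : ℕ} (v : Wsp n) : ZMod 2 := v.2 v.1


/-- The polar (symplectic) form associated to `Qf`. -/
def Bf {n : ℕ} (y z : Wsp n) : ZMod 2 := y.2 z.1 + z.2 y.1

lemma Qf_add {n : ℕ} (y z : Wsp n) : Qf (y + z) = Qf y + Qf z + Bf y z := by
  simp only [Qf, Bf, Prod.fst_add, Prod.snd_add, LinearMap.add_apply, map_add]
  ring

lemma Bf_add_right {n : ℕ} (y z1 z2 : Wsp n) : Bf y (z1 + z2) = Bf y z1 + Bf y z2 := by
  simp only [Bf, Prod.fst_add, Prod.snd_add, LinearMap.add_apply, map_add]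
  ring

lemma Bf_comm {n : ℕ} (y z : Wsp n) : Bf y z = Bf z y := by
  simp only [Bf]; ring

lemma Bf_self {n : ℕ} (y : Wsp n) : Bf y y = 0 := by
  simp only [Bf]
  exact (by decide : ∀ t : ZMod 2, t + t = 0) _

lemma addself {M : Type*} [AddCommMonoid M] [Module (ZMod 2) M] (x : M) : x + x = 0 := by
  have h : x + x = (1 + 1 : ZMod 2) • x := by rw [add_smul, one_smul]
  rw [h, (by decide : (1 + 1 : ZMod 2) = 0), zero_smul]

lemma exists_dual_pair {n : ℕ} (x a : Fin n → ZMod 2) (hx : x ≠ 0) (ha : a ≠ 0)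
    (hxa : x ≠ a) (c : ZMod 2) :
    ∃ f : (Fin n → ZMod 2) →ₗ[ZMod 2] ZMod 2, f x = 1 ∧ f a = c := by
  have hpair : LinearIndependent (ZMod 2) ![x, a] := by
    rw [LinearIndependent.pair_iff]
    intro s t hst
    rcases (by decide : ∀ s : ZMod 2, s = 0 ∨ s = 1) s with rfl | rfl <;>
      rcases (by decide : ∀ s : ZMod 2, s = 0 ∨ s = 1) t with rfl | rfl <;>
      simp only [zero_smul, one_smul, add_zero, zero_add] at hst
    · exact ⟨rfl, rfl⟩
    · exact absurd hst ha
    · exact absurd hst hx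
    · exact absurd ((add_eq_zero_iff_eq_neg.mp hst).trans
        (neg_eq_of_add_eq_zero_left (addself a))) hxa
  have hli : LinearIndepOn (ZMod 2) id ({x, a} : Set (Fin n → ZMod 2)) := by
    have h := hpair.linearIndepOn_id
    have hr : Set.range ![x, a] = {x, a} := by
      ext y; simp [Matrix.range_cons, Matrix.range_empty]; tauto
    rwa [hr] at h
  have hxm : x ∈ hli.extend (Set.subset_univ _) := hli.subset_extend _ (by simp)
  have ham : a ∈ hli.extend (Set.subset_univ _) := hli.subset_extend _ (by simp)
  set B := Module.Basis.extend hli with hB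
  have hne : (⟨x, hxm⟩ : hli.extend (Set.subset_univ _)) ≠ ⟨a, ham⟩ := by
    simpa [Subtype.ext_iff] using hxa
  have exx : B ⟨x, hxm⟩ = x := Module.Basis.extend_apply_self hli ⟨x, hxm⟩
  have exa : B ⟨a, ham⟩ = a := Module.Basis.extend_apply_self hli ⟨a, ham⟩
  have e1 : B.repr (B ⟨x, hxm⟩) ⟨x, hxm⟩ = 1 := by rw [Module.Basis.repr_self_apply]; simp
  have e2 : B.repr (B ⟨x, hxm⟩) ⟨a, ham⟩ = 0 := by rw [Module.Basis.repr_self_apply]; simp [hne]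
  have e3 : B.repr (B ⟨a, ham⟩) ⟨x, hxm⟩ = 0 := by rw [Module.Basis.repr_self_apply]; simp [hne.symm]
  have e4 : B.repr (B ⟨a, ham⟩) ⟨a, ham⟩ = 1 := by rw [Module.Basis.repr_self_apply]; simp
  rw [exx] at e1 e2
  rw [exa] at e3 e4
  refine ⟨B.coord ⟨x, hxm⟩ + c • B.coord ⟨a, ham⟩, ?_, ?_⟩
  · simp [Module.Basis.coord_apply, e1, e2]
  · simp [Module.Basis.coord_apply, e3, e4]

lemma exists_witness {n : ℕ} (hn : 3 ≤ n) (s : Wsp n) (hs : s ≠ 0) :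
    ∃ z : Wsp n, Qf z = 1 ∧ Bf z s = 1 := by
  obtain ⟨a, φ⟩ := s
  by_cases ha : a = 0
  · subst ha
    have hφ : φ ≠ 0 := fun h => hs (by simp [h, Prod.ext_iff])
    have hx : ∃ x, φ x ≠ 0 := by
      by_contra h
      push_neg at h
      exact hφ (LinearMap.ext fun y => by simpa using h y)
    obtain ⟨x, hx⟩ := hx
    have hx1 : φ x = 1 := (by decide : ∀ c : ZMod 2, c ≠ 0 → c = 1) _ hx
    have hx0 : x ≠ 0 := fun h => hx (by simp [h])
    obtain ⟨i, hi⟩ := Function.ne_iff.mp hx0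
    have hi1 : x i = 1 := (by decide : ∀ c : ZMod 2, c ≠ 0 → c = 1) _ (by simpa using hi)
    refine ⟨(x, LinearMap.proj i), ?_, ?_⟩
    · simpa [Qf] using hi1
    · simp [Bf, hx1]
  · set i0 : Fin n := ⟨0, by omega⟩
    set i1 : Fin n := ⟨1, by omega⟩
    set e0 : Fin n → ZMod 2 := Pi.single i0 1 with he0
    set e1 : Fin n → ZMod 2 := Pi.single i1 1 with he1
    have h01 : i0 ≠ i1 := by simp [i0, i1, Fin.ext_iff]
    have he0nz : e0 ≠ 0 := fun h => by
      have := congrFun h i0; simp [he0, Pi.single_eq_same] at this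
    have he1nz : e1 ≠ 0 := fun h => by
      have := congrFun h i1; simp [he1, Pi.single_eq_same] at this
    set x : Fin n → ZMod 2 := if a = e0 then e1 else e0 with hxdef
    have hxnz : x ≠ 0 := by
      rw [hxdef]; split <;> assumption
    have hxa : x ≠ a := by
      rw [hxdef]; split
      · rename_i h; rw [h]
        intro hc
        have := congrFun hc i0
        simp [he0, he1, Pi.single_eq_same, Pi.single_eq_of_ne h01] at this
      · rename_i h; exact fun hc => h hc.symm
    obtain ⟨f, hf1, hf2⟩ := exists_dual_pair x a hxnz ha hxa (1 + φ x)
    refine ⟨(x, f), by simpa [Qf] using hf1, ?_⟩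
    show f a + φ x = 1
    rw [hf2]
    exact (by decide : ∀ t : ZMod 2, 1 + t + t = 1) _



theorem stmt17 {n : ℕ} (hn : 3 ≤ n) (u v w : Wsp n)
    (huv : u ≠ v) (huw : u ≠ w) (hvw : v ≠ w)
    (hu : Qf u = 1) (hv : Qf v = 1) (hw : Qf w = 1)
    (auv : Qf (u + v) = 1) (auw : Qf (u + w) = 1) (avw : Qf (v + w) = 1) :
    w = u + v ↔
      ∀ z : Wsp n, Qf z = 1 → z ∉ ({u, v, w} : Set (Wsp n)) →
        ({a ∈ ({u, v, w} : Set (Wsp n)) | Qf (z + a) = 1}).ncard = 2 ∨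
        ({a ∈ ({u, v, w} : Set (Wsp n)) | Qf (z + a) = 1}).ncard = 0 := by
  have two : ∀ t : ZMod 2, t = 0 ∨ t = 1 := by decide
  have hBuv : Bf u v = 1 := by
    have h := Qf_add u v; rw [auv, hu, hv] at h
    exact (by decide : ∀ t : ZMod 2, 1 = 1 + 1 + t → t = 1) _ h
  have hBuw : Bf u w = 1 := by
    have h := Qf_add u w; rw [auw, hu, hw] at h
    exact (by decide : ∀ t : ZMod 2, 1 = 1 + 1 + t → t = 1) _ h
  have hBvw : Bf v w = 1 := by
    have h := Qf_add v w; rw [avw, hv, hw] at h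
    exact (by decide : ∀ t : ZMod 2, 1 = 1 + 1 + t → t = 1) _ h
  constructor
  · -- forward direction
    intro hw' z hz hzm
    have pzu : Qf (z + u) = Bf z u := by
      rw [Qf_add, hz, hu]; exact (by decide : ∀ t : ZMod 2, 1 + 1 + t = t) _
    have pzv : Qf (z + v) = Bf z v := by
      rw [Qf_add, hz, hv]; exact (by decide : ∀ t : ZMod 2, 1 + 1 + t = t) _
    have pzw : Qf (z + w) = Bf z w := by
      rw [Qf_add, hz, hw]; exact (by decide : ∀ t : ZMod 2, 1 + 1 + t = t) _
    have hzw : Bf z w = Bf z u + Bf z v := by rw [hw', Bf_add_right]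
    rcases two (Bf z u) with h1 | h1 <;> rcases two (Bf z v) with h2 | h2
    · -- (0,0) : no neighbours
      right
      have h3 : Bf z w = 0 := by rw [hzw, h1, h2]; decide
      have hset : {a ∈ ({u, v, w} : Set (Wsp n)) | Qf (z + a) = 1} = ∅ := by
        ext b
        simp only [Set.mem_setOf_eq, Set.mem_insert_iff, Set.mem_singleton_iff,
          Set.mem_empty_iff_false, iff_false, not_and]
        rintro (rfl | rfl | rfl)
        · rw [pzu, h1]; exact (by decide)
        · rw [pzv, h2]; exact (by decide)
        · rw [pzw, h3]; exact (by decide)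
      rw [hset, Set.ncard_empty]
    · -- (0,1) : neighbours v and w
      left
      have h3 : Bf z w = 1 := by rw [hzw, h1, h2]; decide
      have hset : {a ∈ ({u, v, w} : Set (Wsp n)) | Qf (z + a) = 1} = {v, w} := by
        ext b
        simp only [Set.mem_setOf_eq, Set.mem_insert_iff, Set.mem_singleton_iff]
        constructor
        · rintro ⟨(rfl | rfl | rfl), hb⟩
          · rw [pzu, h1] at hb; exact absurd hb (by decide)
          · exact Or.inl rfl
          · exact Or.inr rfl
        · rintro (rfl | rfl)
          · exact ⟨Or.inr (Or.inl rfl), by rw [pzv, h2]⟩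
          · exact ⟨Or.inr (Or.inr rfl), by rw [pzw, h3]⟩
      rw [hset, Set.ncard_pair hvw]
    · -- (1,0) : neighbours u and w
      left
      have h3 : Bf z w = 1 := by rw [hzw, h1, h2]; decide
      have hset : {a ∈ ({u, v, w} : Set (Wsp n)) | Qf (z + a) = 1} = {u, w} := by
        ext b
        simp only [Set.mem_setOf_eq, Set.mem_insert_iff, Set.mem_singleton_iff]
        constructor
        · rintro ⟨(rfl | rfl | rfl), hb⟩
          · exact Or.inl rfl
          · rw [pzv, h2] at hb; exact absurd hb (by decide)
          · exact Or.inr rfl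
        · rintro (rfl | rfl)
          · exact ⟨Or.inl rfl, by rw [pzu, h1]⟩
          · exact ⟨Or.inr (Or.inr rfl), by rw [pzw, h3]⟩
      rw [hset, Set.ncard_pair huw]
    · -- (1,1) : neighbours u and v
      left
      have h3 : Bf z w = 0 := by rw [hzw, h1, h2]; decide
      have hset : {a ∈ ({u, v, w} : Set (Wsp n)) | Qf (z + a) = 1} = {u, v} := by
        ext b
        simp only [Set.mem_setOf_eq, Set.mem_insert_iff, Set.mem_singleton_iff]
        constructor
        · rintro ⟨(rfl | rfl | rfl), hb⟩
          · exact Or.inl rfl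
          · exact Or.inr rfl
          · rw [pzw, h3] at hb; exact absurd hb (by decide)
        · rintro (rfl | rfl)
          · exact ⟨Or.inl rfl, by rw [pzu, h1]⟩
          · exact ⟨Or.inr (Or.inl rfl), by rw [pzv, h2]⟩
      rw [hset, Set.ncard_pair huv]
  · -- backward direction
    intro H
    by_contra hne
    have hs0 : u + v + w ≠ 0 := by
      intro h0
      apply hne
      have h2 := congrArg (· + w) h0
      simpa [add_assoc, addself w] using h2.symm
    obtain ⟨z, hz1, hz2⟩ := exists_witness hn _ hs0
    rw [Bf_add_right, Bf_add_right] at hz2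
    have pzu : Qf (z + u) = Bf z u := by
      rw [Qf_add, hz1, hu]; exact (by decide : ∀ t : ZMod 2, 1 + 1 + t = t) _
    have pzv : Qf (z + v) = Bf z v := by
      rw [Qf_add, hz1, hv]; exact (by decide : ∀ t : ZMod 2, 1 + 1 + t = t) _
    have pzw : Qf (z + w) = Bf z w := by
      rw [Qf_add, hz1, hw]; exact (by decide : ∀ t : ZMod 2, 1 + 1 + t = t) _
    have hzm : z ∉ ({u, v, w} : Set (Wsp n)) := by
      intro hm
      simp only [Set.mem_insert_iff, Set.mem_singleton_iff] at hm
      rcases hm with rfl | rfl | rfl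
      · rw [Bf_self, hBuv, hBuw] at hz2; exact absurd hz2 (by decide)
      · rw [Bf_comm z u, hBuv, Bf_self, hBvw] at hz2; exact absurd hz2 (by decide)
      · rw [Bf_comm z u, hBuw, Bf_comm z v, hBvw, Bf_self] at hz2
        exact absurd hz2 (by decide)
    have hd := H z hz1 hzm
    rcases two (Bf z u) with h1 | h1 <;> rcases two (Bf z v) with h2 | h2 <;>
      rcases two (Bf z w) with h3 | h3
    · rw [h1, h2, h3] at hz2; exact absurd hz2 (by decide)
    · -- (0,0,1) : set = {w}
      have hset : {a ∈ ({u, v, w} : Set (Wsp n)) | Qf (z + a) = 1} = {w} := by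
        ext b
        simp only [Set.mem_setOf_eq, Set.mem_insert_iff, Set.mem_singleton_iff]
        constructor
        · rintro ⟨(rfl | rfl | rfl), hb⟩
          · rw [pzu, h1] at hb; exact absurd hb (by decide)
          · rw [pzv, h2] at hb; exact absurd hb (by decide)
          · rfl
        · rintro rfl
          exact ⟨Or.inr (Or.inr rfl), by rw [pzw, h3]⟩
      rw [hset, Set.ncard_singleton] at hd
      rcases hd with h | h <;> omega
    · -- (0,1,0) : set = {v}
      have hset : {a ∈ ({u, v, w} : Set (Wsp n)) | Qf (z + a) = 1} = {v} := by
        ext b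
        simp only [Set.mem_setOf_eq, Set.mem_insert_iff, Set.mem_singleton_iff]
        constructor
        · rintro ⟨(rfl | rfl | rfl), hb⟩
          · rw [pzu, h1] at hb; exact absurd hb (by decide)
          · rfl
          · rw [pzw, h3] at hb; exact absurd hb (by decide)
        · rintro rfl
          exact ⟨Or.inr (Or.inl rfl), by rw [pzv, h2]⟩
      rw [hset, Set.ncard_singleton] at hd
      rcases hd with h | h <;> omega
    · rw [h1, h2, h3] at hz2; exact absurd hz2 (by decide)
    · -- (1,0,0) : set = {u}
      have hset : {a ∈ ({u, v, w} : Set (Wsp n)) | Qf (z + a) = 1} = {u} := by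
        ext b
        simp only [Set.mem_setOf_eq, Set.mem_insert_iff, Set.mem_singleton_iff]
        constructor
        · rintro ⟨(rfl | rfl | rfl), hb⟩
          · rfl
          · rw [pzv, h2] at hb; exact absurd hb (by decide)
          · rw [pzw, h3] at hb; exact absurd hb (by decide)
        · rintro rfl
          exact ⟨Or.inl rfl, by rw [pzu, h1]⟩
      rw [hset, Set.ncard_singleton] at hd
      rcases hd with h | h <;> omega
    · rw [h1, h2, h3] at hz2; exact absurd hz2 (by decide)
    · rw [h1, h2, h3] at hz2; exact absurd hz2 (by decide)
    · -- (1,1,1) : set = {u, v, w}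
      have hset : {a ∈ ({u, v, w} : Set (Wsp n)) | Qf (z + a) = 1}
          = ({u, v, w} : Set (Wsp n)) := by
        ext b
        simp only [Set.mem_setOf_eq, Set.mem_insert_iff, Set.mem_singleton_iff]
        constructor
        · rintro ⟨hb, _⟩; exact hb
        · rintro (rfl | rfl | rfl)
          · exact ⟨Or.inl rfl, by rw [pzu, h1]⟩
          · exact ⟨Or.inr (Or.inl rfl), by rw [pzv, h2]⟩
          · exact ⟨Or.inr (Or.inr rfl), by rw [pzw, h3]⟩
      rw [hset, Set.ncard_insert_of_notMem (by simp [huv, huw]) (Set.toFinite _),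
        Set.ncard_pair hvw] at hd
      rcases hd with h | h <;> omega
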